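/- Let A₁,…,Aₙ, B₁,…,Bₙ be bounded operators on a complex Hilbert space and r₁,…,rₙ positive reals. Then ∑_{i<j} |√(rᵢ/rⱼ)Aᵢ − √(rⱼ/rᵢ)Aⱼ|² + ∑_{i<j} |√(rᵢ/rⱼ)Bᵢ − √(rⱼ/rᵢ)Bⱼ|² = ∑_{i,j=1}^n |√(rᵢ/rⱼ)Aᵢ − √(rⱼ/rᵢ)Bⱼ|² − |∑_{i=1}^n (Aᵢ − Bᵢ)|². -/

import Mathlib

open ContinuousLinearMap

lemma swap_sum' {M : Type*} [AddCommMonoid M] {n : ℕ} (f : Fin n → Fin n → M) :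
    ∑ i, ∑ j ∈ Finset.Iio i, f i j = ∑ i, ∑ j ∈ Finset.Ioi i, f j i := by
  rw [Finset.sum_sigma', Finset.sum_sigma']
  refine Finset.sum_nbij' (fun x => ⟨x.2, x.1⟩) (fun x => ⟨x.2, x.1⟩) ?_ ?_ (fun _ _ => rfl)
    (fun _ _ => rfl) (fun _ _ => rfl) <;>
  simp [Finset.mem_sigma, Sigma.forall]

lemma pair_decomp' {M : Type*} [AddCommMonoid M] {n : ℕ} (f : Fin n → Fin n → M) :
    ∑ i, ∑ j, f i j = (∑ i, f i i) + ∑ i, ∑ j ∈ Finset.Ioi i, (f i j + f j i) := by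
  have h : ∀ i : Fin n, ∑ j, f i j
      = f i i + (∑ j ∈ Finset.Ioi i, f i j + ∑ j ∈ Finset.Iio i, f i j) := by
    intro i
    rw [← Finset.sum_disjUnion, Finset.Ioi_disjUnion_Iio]
    have h2 := Finset.sum_add_sum_compl ({i} : Finset (Fin n)) (f i)
    rw [Finset.sum_singleton] at h2
    rw [← h2]
    congr 1
    exact Finset.disjoint_left.mpr fun a ha hb => lt_asymm (Finset.mem_Ioi.mp ha) (Finset.mem_Iio.mp hb)
  simp_rw [h, Finset.sum_add_distrib, swap_sum']

lemma expand_term' {E : Type*} [NormedAddCommGroup E] [InnerProductSpace ℂ E] [CompleteSpace E]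
    (X Y : E →L[ℂ] E) (c d : ℂ) (hc : star c = c) (hd : star d = d) (h : c * d = 1) :
    adjoint (c • X - d • Y) * (c • X - d • Y)
      = (c * c) • (adjoint X * X) + (d * d) • (adjoint Y * Y)
        - adjoint X * Y - adjoint Y * X := by
  rw [← star_eq_adjoint, ← star_eq_adjoint, ← star_eq_adjoint]
  have hdc : d * c = 1 := by rw [mul_comm]; exact h
  simp only [star_sub, star_smul, hc, hd, sub_mul, mul_sub, smul_sub, smul_mul_assoc,
    mul_smul_comm, smul_smul, h, hdc, one_smul]
  abel

theorem operator_weighted_parallelogram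
    {E : Type*} [NormedAddCommGroup E] [InnerProductSpace ℂ E] [CompleteSpace E]
    {n : ℕ} (A B : Fin n → (E →L[ℂ] E)) (r : Fin n → ℝ) (hr : ∀ i, 0 < r i) :
    (∑ i, ∑ j ∈ Finset.univ.filter (fun j => i < j),
        adjoint ((Real.sqrt (r i / r j) : ℂ) • A i - (Real.sqrt (r j / r i) : ℂ) • A j)
          * ((Real.sqrt (r i / r j) : ℂ) • A i - (Real.sqrt (r j / r i) : ℂ) • A j))
      + (∑ i, ∑ j ∈ Finset.univ.filter (fun j => i < j),
          adjoint ((Real.sqrt (r i / r j) : ℂ) • B i - (Real.sqrt (r j / r i) : ℂ) • B j)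
            * ((Real.sqrt (r i / r j) : ℂ) • B i - (Real.sqrt (r j / r i) : ℂ) • B j))
      = (∑ i, ∑ j,
          adjoint ((Real.sqrt (r i / r j) : ℂ) • A i - (Real.sqrt (r j / r i) : ℂ) • B j)
            * ((Real.sqrt (r i / r j) : ℂ) • A i - (Real.sqrt (r j / r i) : ℂ) • B j))
        - adjoint (∑ i, (A i - B i)) * (∑ i, (A i - B i)) := by
  have hst : ∀ i j : Fin n, star ((Real.sqrt (r i / r j) : ℂ)) = (Real.sqrt (r i / r j) : ℂ) :=
    fun i j => Complex.conj_ofReal _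
  have hmul : ∀ i j : Fin n,
      ((Real.sqrt (r i / r j) : ℂ)) * ((Real.sqrt (r j / r i) : ℂ)) = 1 := by
    intro i j
    rw [← Complex.ofReal_mul, ← Real.sqrt_mul (div_nonneg (hr i).le (hr j).le)]
    rw [show r i / r j * (r j / r i) = 1 by
      rw [div_mul_div_comm, mul_comm (r i)]
      exact div_self (mul_pos (hr j) (hr i)).ne']
    simp
  have key : ∀ (X Y : Fin n → E →L[ℂ] E) (i j : Fin n),
      adjoint ((Real.sqrt (r i / r j) : ℂ) • X i - (Real.sqrt (r j / r i) : ℂ) • Y j)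
          * ((Real.sqrt (r i / r j) : ℂ) • X i - (Real.sqrt (r j / r i) : ℂ) • Y j)
        = ((Real.sqrt (r i / r j) : ℂ) * (Real.sqrt (r i / r j) : ℂ)) • (adjoint (X i) * X i)
          + ((Real.sqrt (r j / r i) : ℂ) * (Real.sqrt (r j / r i) : ℂ)) • (adjoint (Y j) * Y j)
          - adjoint (X i) * Y j - adjoint (Y j) * X i :=
    fun X Y i j => expand_term' _ _ _ _ (hst i j) (hst j i) (hmul i j)
  have hfil : ∀ i : Fin n, Finset.univ.filter (fun j => i < j) = Finset.Ioi i := by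
    intro i; ext j; simp
  rw [map_sum, Finset.sum_mul]
  simp_rw [Finset.mul_sum, key A A, key B B, key A B, hfil]
  rw [pair_decomp' (fun i j =>
      ((Real.sqrt (r i / r j) : ℂ) * (Real.sqrt (r i / r j) : ℂ)) • (adjoint (A i) * A i)
        + ((Real.sqrt (r j / r i) : ℂ) * (Real.sqrt (r j / r i) : ℂ)) • (adjoint (B j) * B j)
        - adjoint (A i) * B j - adjoint (B j) * A i),
    pair_decomp' (fun i j => adjoint (A i - B i) * (A j - B j))]
  have hD : (∑ i, (((Real.sqrt (r i / r i) : ℂ) * (Real.sqrt (r i / r i) : ℂ)) • (adjoint (A i) * A i)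
        + ((Real.sqrt (r i / r i) : ℂ) * (Real.sqrt (r i / r i) : ℂ)) • (adjoint (B i) * B i)
        - adjoint (A i) * B i - adjoint (B i) * A i))
      = ∑ i, adjoint (A i - B i) * (A i - B i) := by
    refine Finset.sum_congr rfl fun i _ => ?_
    rw [hmul i i, one_smul, one_smul, ← star_eq_adjoint, ← star_eq_adjoint, ← star_eq_adjoint,
      star_sub, sub_mul, mul_sub, mul_sub]
    abel
  rw [hD]
  rw [show ∀ a b c : E →L[ℂ] E, a + b - (a + c) = b - c from fun a b c => by abel]
  rw [← Finset.sum_sub_distrib, ← Finset.sum_add_distrib]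
  refine Finset.sum_congr rfl fun i _ => ?_
  rw [← Finset.sum_sub_distrib, ← Finset.sum_add_distrib]
  refine Finset.sum_congr rfl fun j hj => ?_
  rw [← star_eq_adjoint (A i - B i), ← star_eq_adjoint (A j - B j), star_sub, star_sub,
    sub_mul, mul_sub, mul_sub, sub_mul, mul_sub, mul_sub]
  simp only [star_eq_adjoint]
  abel
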